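/- Let S₁,…,S_r be random subsets of a finite metric space (V,d) with R_i = 2^{i-2}, ε_i = c·R_i/n (with 0 < c ≤ 1, n = |V| ≥ 2), such that for all u,v: P(cut_{u,v}(S_i)) ≤ (K·log²n / R_i)·d(u,v) for some constant K, P(cut_{u,v}(S_i)) = 0 whenever d(u,v) < ε_i, and P(cut_{u,v}(S_i)) ≤ 1 always. Then for every u,v with d(u,v) ≥ 1, E[∑_{i=1}^r |ρ(u)_i − ρ(v)_i|] ≤ C·log³(n)·d(u,v) for some constant C depending only on K and c. -/

import Mathlib

open MeasureTheory
open scoped Classical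

lemma geom_sum_aux (m : ℕ) :
    ∑ i ∈ Finset.Icc 1 m, (2 : ℝ) ^ ((i : ℤ) - 2) ≤ (2 : ℝ) ^ ((m : ℤ) - 1) := by
  induction m with
  | zero => simp
  | succ m ih =>
    rw [Finset.sum_Icc_succ_top (by omega)]
    have h1 : ((m + 1 : ℕ) : ℤ) - 2 = (m : ℤ) - 1 := by push_cast; ring
    have h2 : ((m + 1 : ℕ) : ℤ) - 1 = ((m : ℤ) - 1) + 1 := by push_cast; ring
    rw [h1, h2, zpow_add₀ (by norm_num : (2:ℝ) ≠ 0)]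
    nlinarith [zpow_pos (by norm_num : (0:ℝ) < 2) ((m : ℤ) - 1)]

theorem embedding_upper_bound (K c : ℝ) (hK : 0 < K) (hc : 0 < c) (hc1 : c ≤ 1) :
    ∃ C : ℝ, 0 < C ∧
      ∀ (V : Type) (_ : MetricSpace V) (_ : Fintype V) (n r : ℕ),
        n = Fintype.card V → 2 ≤ n →
        (∀ u v : V, u ≠ v → 1 ≤ dist u v) →
        ∀ (Ω : Type) (_ : MeasurableSpace Ω) (μ : Measure Ω),
          IsProbabilityMeasure μ →
          ∀ (S : ℕ → Ω → Set V),
            (∀ i (v : V), MeasurableSet {ω | v ∈ S i ω}) →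
            (∀ i ∈ Finset.Icc 1 r, ∀ u v : V,
              μ {ω | ¬ (u ∈ S i ω ↔ v ∈ S i ω)}
                ≤ ENNReal.ofReal (K * (Real.logb 2 n) ^ 2 / (2 : ℝ) ^ ((i : ℤ) - 2)
                    * dist u v)) →
            (∀ i ∈ Finset.Icc 1 r, ∀ u v : V,
              dist u v < c * (2 : ℝ) ^ ((i : ℤ) - 2) / n →
              μ {ω | ¬ (u ∈ S i ω ↔ v ∈ S i ω)} = 0) →
            ∀ u v : V, 1 ≤ dist u v →
              ∑ i ∈ Finset.Icc 1 r,
                ∫ ω, |(if u ∈ S i ω then (2 : ℝ) ^ ((i : ℤ) - 2) else 0)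
                    - (if v ∈ S i ω then (2 : ℝ) ^ ((i : ℤ) - 2) else 0)| ∂μ
                ≤ C * (Real.logb 2 n) ^ 3 * dist u v := by
  refine ⟨2 + (2 - Real.logb 2 c) * K, ?_, ?_⟩
  · have hg : Real.logb 2 c ≤ 0 := Real.logb_nonpos (by norm_num) hc.le hc1
    nlinarith
  intro V _ _ n r hn hn2 _hsep Ω _ μ hμ S hmeas hub hzero u v hd1
  set d : ℝ := dist u v with hdd
  set L : ℝ := Real.logb 2 n with hL
  have hd0 : (0:ℝ) < d := lt_of_lt_of_le one_pos hd1
  have hn2' : (2:ℝ) ≤ (n:ℝ) := by exact_mod_cast hn2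
  have hnpos : (0:ℝ) < n := by linarith
  have hL1 : 1 ≤ L := by
    rw [hL, show (1:ℝ) = Real.logb 2 2 from (Real.logb_self_eq_one (by norm_num)).symm]
    exact Real.logb_le_logb_of_le (by norm_num) (by norm_num) hn2'
  have hg : Real.logb 2 c ≤ 0 := Real.logb_nonpos (by norm_num) hc.le hc1
  -- notation
  set R : ℕ → ℝ := fun i => (2:ℝ) ^ ((i : ℤ) - 2) with hR
  have hRpos : ∀ i, (0:ℝ) < R i := fun i => zpow_pos (by norm_num) _
  set cutS : ℕ → Set Ω := fun i => {ω | ¬ (u ∈ S i ω ↔ v ∈ S i ω)} with hcutS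
  have hcut_meas : ∀ i, MeasurableSet (cutS i) := by
    intro i
    have h1 := hmeas i u
    have h2 := hmeas i v
    have : cutS i = ({ω | u ∈ S i ω} \ {ω | v ∈ S i ω}) ∪
        ({ω | v ∈ S i ω} \ {ω | u ∈ S i ω}) := by
      ext ω; simp only [hcutS, Set.mem_setOf_eq, Set.mem_union, Set.mem_diff,
        Set.mem_setOf_eq]; tauto
    rw [this]; exact (h1.diff h2).union (h2.diff h1)
  set T : ℕ → ℝ := fun i => R i * (μ (cutS i)).toReal with hT
  have hTnn : ∀ i, 0 ≤ T i := fun i =>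
    mul_nonneg (hRpos i).le ENNReal.toReal_nonneg
  -- integral computation
  have hint : ∀ i,
      (∫ ω, |(if u ∈ S i ω then (2 : ℝ) ^ ((i : ℤ) - 2) else 0)
          - (if v ∈ S i ω then (2 : ℝ) ^ ((i : ℤ) - 2) else 0)| ∂μ) = T i := by
    intro i
    have heq : (fun ω => |(if u ∈ S i ω then (2 : ℝ) ^ ((i : ℤ) - 2) else 0)
          - (if v ∈ S i ω then (2 : ℝ) ^ ((i : ℤ) - 2) else 0)|)
        = Set.indicator (cutS i) (fun _ => R i) := by
      funext ω
      by_cases hu : u ∈ S i ω <;> by_cases hv : v ∈ S i ω <;>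
        simp [Set.indicator, hcutS, hu, hv, abs_of_nonneg (hRpos i).le, hR]
    rw [heq, integral_indicator_const _ (hcut_meas i), smul_eq_mul, mul_comm]
    rfl
  -- per-term bounds
  have hT_le_R : ∀ i, T i ≤ R i := by
    intro i
    have h1 : (μ (cutS i)).toReal ≤ 1 := by
      have := prob_le_one (μ := μ) (s := cutS i)
      calc (μ (cutS i)).toReal ≤ (1 : ENNReal).toReal :=
            ENNReal.toReal_mono (by norm_num) this
        _ = 1 := by simp
    calc T i = R i * (μ (cutS i)).toReal := rfl
      _ ≤ R i * 1 := mul_le_mul_of_nonneg_left h1 (hRpos i).le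
      _ = R i := mul_one _
  have hT_le : ∀ i ∈ Finset.Icc 1 r, T i ≤ K * L ^ 2 * d := by
    intro i hi
    have h := hub i hi u v
    have hx : (0:ℝ) ≤ K * L ^ 2 / R i * d := by positivity
    have h2 : (μ (cutS i)).toReal ≤ K * L ^ 2 / R i * d :=
      ENNReal.toReal_le_of_le_ofReal hx h
    have := mul_le_mul_of_nonneg_left h2 (hRpos i).le
    calc T i ≤ R i * (K * L ^ 2 / R i * d) := this
      _ = K * L ^ 2 * d := by field_simp; exact div_self (hRpos i).ne'
  have hT_zero : ∀ i ∈ Finset.Icc 1 r, d < c * R i / n → T i = 0 := by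
    intro i hi h
    rw [hT]; simp [hzero i hi u v h]
    exact Or.inr (by rw [show μ (cutS i) = 0 from hzero i hi u v h]; simp)
  -- split the sum
  have hsum : ∑ i ∈ Finset.Icc 1 r,
      (∫ ω, |(if u ∈ S i ω then (2 : ℝ) ^ ((i : ℤ) - 2) else 0)
          - (if v ∈ S i ω then (2 : ℝ) ^ ((i : ℤ) - 2) else 0)| ∂μ)
      = ∑ i ∈ Finset.Icc 1 r, T i := Finset.sum_congr rfl (fun i _ => hint i)
  rw [hsum]
  set A : Finset ℕ := (Finset.Icc 1 r).filter (fun i => R i ≤ d) with hA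
  set B : Finset ℕ := (Finset.Icc 1 r).filter (fun i => ¬ R i ≤ d ∧ c * R i / n ≤ d) with hB
  set Z : Finset ℕ := (Finset.Icc 1 r).filter (fun i => ¬ R i ≤ d ∧ ¬ c * R i / n ≤ d) with hZ
  have hsplit : ∑ i ∈ Finset.Icc 1 r, T i = ∑ i ∈ A, T i + (∑ i ∈ B, T i + ∑ i ∈ Z, T i) := by
    rw [hA, hB, hZ, ← Finset.sum_filter_add_sum_filter_not (Finset.Icc 1 r) (fun i => R i ≤ d)]
    congr 1
    rw [← Finset.sum_filter_add_sum_filter_not ((Finset.Icc 1 r).filter (fun i => ¬ R i ≤ d))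
      (fun i => c * R i / n ≤ d), Finset.filter_filter, Finset.filter_filter]
  rw [hsplit]
  -- Z sum is zero
  have hZ0 : ∑ i ∈ Z, T i = 0 := by
    apply Finset.sum_eq_zero
    intro i hi
    rw [hZ, Finset.mem_filter] at hi
    exact hT_zero i hi.1 (lt_of_not_ge hi.2.2)
  -- A sum
  have hAsum : ∑ i ∈ A, T i ≤ 2 * d := by
    rcases Finset.eq_empty_or_nonempty A with h | h
    · rw [h]; simp; positivity
    · set m := A.max' h with hm
      have hmA : m ∈ A := A.max'_mem h
      have hmd : R m ≤ d := (Finset.mem_filter.mp hmA).2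
      have hsub : A ⊆ Finset.Icc 1 m := by
        intro j hj
        have hj1 := (Finset.mem_filter.mp hj).1
        rw [Finset.mem_Icc] at hj1 ⊢
        exact ⟨hj1.1, A.le_max' j hj⟩
      calc ∑ i ∈ A, T i ≤ ∑ i ∈ A, R i := Finset.sum_le_sum (fun i _ => hT_le_R i)
        _ ≤ ∑ i ∈ Finset.Icc 1 m, R i :=
            Finset.sum_le_sum_of_subset_of_nonneg hsub (fun i _ _ => (hRpos i).le)
        _ ≤ (2:ℝ) ^ ((m : ℤ) - 1) := geom_sum_aux m
        _ = 2 * R m := by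
            rw [hR]; rw [show ((m:ℤ) - 1) = ((m:ℤ) - 2) + 1 by ring,
              zpow_add₀ (by norm_num : (2:ℝ) ≠ 0)]; ring
        _ ≤ 2 * d := by linarith
  -- B sum
  have hBsum : ∑ i ∈ B, T i ≤ (Real.logb 2 (n / c) + 1) * (K * L ^ 2 * d) := by
    have hnc1 : (1:ℝ) ≤ n / c := by
      rw [le_div_iff₀ hc]; linarith
    have hlognc : 0 ≤ Real.logb 2 (n / c) := Real.logb_nonneg (by norm_num) hnc1
    rcases Finset.eq_empty_or_nonempty B with h | h
    · rw [h]; simp; positivity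
    · set i0 := B.min' h with hi0
      have hi0B : i0 ∈ B := B.min'_mem h
      have hi0d : d < R i0 := lt_of_not_ge (Finset.mem_filter.mp hi0B).2.1
      set F : ℕ := ⌊Real.logb 2 (n / c)⌋₊ with hF
      have hsub : B ⊆ Finset.Icc i0 (i0 + F) := by
        intro j hj
        rw [Finset.mem_Icc]
        refine ⟨B.min'_le j hj, ?_⟩
        have hji0 : i0 ≤ j := B.min'_le j hj
        have hjd : c * R j / n ≤ d := (Finset.mem_filter.mp hj).2.2
        -- 2^(j - i0) ≤ n/c
        have hpow : (2:ℝ) ^ ((j:ℤ) - (i0:ℤ)) ≤ n / c := by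
          have h1 : R j ≤ d * n / c := by
            rw [div_le_iff₀ hnpos] at hjd
            rw [le_div_iff₀ hc]
            nlinarith [hjd]
          have h2 : (2:ℝ) ^ ((j:ℤ) - (i0:ℤ)) = R j / R i0 := by
            rw [hR, ← zpow_sub₀ (by norm_num : (2:ℝ) ≠ 0)]
            congr 1; ring
          rw [h2]
          calc R j / R i0 ≤ (d * n / c) / d := by
                gcongr
            _ = n / c := by field_simp
        have hcast : ((j - i0 : ℕ) : ℝ) ≤ Real.logb 2 (n / c) := by
          rw [Real.le_logb_iff_rpow_le (by norm_num) (by linarith)]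
          have : ((j - i0 : ℕ) : ℤ) = (j:ℤ) - (i0:ℤ) := by omega
          rw [show ((2:ℝ) ^ (((j - i0 : ℕ)):ℝ) = (2:ℝ) ^ ((j:ℤ) - (i0:ℤ))) from ?_]
          · exact hpow
          · rw [← this, Real.rpow_natCast, zpow_natCast]
        have : j - i0 ≤ F := Nat.le_floor hcast
        omega
      have hcard : B.card ≤ F + 1 := by
        calc B.card ≤ (Finset.Icc i0 (i0 + F)).card := Finset.card_le_card hsub
          _ = F + 1 := by rw [Nat.card_Icc]; omega
      have hFle : (F:ℝ) ≤ Real.logb 2 (n / c) := Nat.floor_le hlognc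
      calc ∑ i ∈ B, T i ≤ B.card • (K * L ^ 2 * d) := by
            apply Finset.sum_le_card_nsmul
            intro i hi
            exact hT_le i (Finset.mem_filter.mp hi).1
        _ = (B.card : ℝ) * (K * L ^ 2 * d) := by rw [nsmul_eq_mul]
        _ ≤ ((F:ℝ) + 1) * (K * L ^ 2 * d) := by
            apply mul_le_mul_of_nonneg_right _ (by positivity)
            exact_mod_cast hcard
        _ ≤ (Real.logb 2 (n / c) + 1) * (K * L ^ 2 * d) := by
            apply mul_le_mul_of_nonneg_right _ (by positivity)
            linarith
  -- combine
  have hlogdiv : Real.logb 2 ((n:ℝ) / c) = L - Real.logb 2 c :=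
    Real.logb_div (by positivity) (ne_of_gt hc)
  rw [hZ0, add_zero]
  have key : (Real.logb 2 ((n:ℝ) / c) + 1) * (K * L ^ 2 * d)
      ≤ (2 - Real.logb 2 c) * K * L ^ 3 * d := by
    rw [hlogdiv]
    have h1 : L - Real.logb 2 c + 1 ≤ (2 - Real.logb 2 c) * L := by nlinarith
    have h2 : (0:ℝ) ≤ K * L ^ 2 * d := by positivity
    calc (L - Real.logb 2 c + 1) * (K * L ^ 2 * d)
        ≤ ((2 - Real.logb 2 c) * L) * (K * L ^ 2 * d) :=
          mul_le_mul_of_nonneg_right h1 h2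
      _ = (2 - Real.logb 2 c) * K * L ^ 3 * d := by ring
  have hL3 : (1:ℝ) ≤ L ^ 3 := one_le_pow₀ hL1
  have h2d : 2 * d ≤ 2 * L ^ 3 * d := by nlinarith
  have := add_le_add hAsum (hBsum.trans key)
  calc ∑ i ∈ A, T i + ∑ i ∈ B, T i
      ≤ 2 * d + (2 - Real.logb 2 c) * K * L ^ 3 * d := this
    _ ≤ 2 * L ^ 3 * d + (2 - Real.logb 2 c) * K * L ^ 3 * d := by linarith
    _ = (2 + (2 - Real.logb 2 c) * K) * L ^ 3 * d := by ring
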